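/- For every group G there exists an R-closure, i.e., a homomorphism G → Ĝ into an R-closed group Ĝ that is initial among homomorphisms of G into R-closed groups: for any homomorphism φ of G into an R-closed group A there is a unique homomorphism Ĝ → A through which φ factors. -/

import Mathlib

open scoped TensorProduct

/-- The set of denominators of (reduced fractional expressions of) elements of `R ⊆ ℚ`. -/
def DR (R : Subring ℚ) : Set ℕ := {d | ∃ q ∈ R, q.den = d}

variable {G H A : Type*} [Group G] [Group H] [Group A]

/-- Evaluation of a monomial over `G` in `n` indeterminates at a tuple of elements of `G`. -/
noncomputable def evalWord {n : ℕ} (g : Fin n → G) :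
    Monoid.Coprod G (FreeGroup (Fin n)) →* G :=
  Monoid.Coprod.lift (MonoidHom.id G) (FreeGroup.lift g)

/-- The projection `G * F → F → F/[F,F]`. -/
noncomputable def toFreeAb (G : Type*) [Group G] (n : ℕ) :
    Monoid.Coprod G (FreeGroup (Fin n)) →* Abelianization (FreeGroup (Fin n)) :=
  Monoid.Coprod.lift 1 Abelianization.of

/-- An `R`-nullhomologous system of equations `xᵢ^e = wᵢ(x₁,…,xₙ)` over `G`. -/
structure NullSys (R : Subring ℚ) (G : Type*) [Group G] where
  n : ℕ
  e : ℕ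
  he : e ∈ DR R
  w : Fin n → Monoid.Coprod G (FreeGroup (Fin n))
  nullh : ∀ i, toFreeAb G n (w i) = 1

/-- A solution of a system of equations over `G`. -/
def NullSys.IsSolution {R : Subring ℚ} (S : NullSys R G) (g : Fin S.n → G) : Prop :=
  ∀ i, (g i) ^ S.e = evalWord g (S.w i)

/-- A group is `R`-closed if every `R`-nullhomologous system over it has a unique solution. -/
def IsRClosed (R : Subring ℚ) (A : Type*) [Group A] : Prop :=
  ∀ S : NullSys R A, ∃! g : Fin S.n → A, S.IsSolution g

/-- A normal subgroup `N ≤ G` is `R`-invisible if it is normally finitely generated and every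
element of `N/[G,N]` has (finite) order lying in `D_R`. -/
def IsRInvisible (R : Subring ℚ) {G : Type*} [Group G] (N : Subgroup G) : Prop :=
  N.Normal ∧
  (∃ s : Finset G, ↑s ⊆ (N : Set G) ∧ Subgroup.normalClosure ↑s = N) ∧
  ∀ x ∈ N, ∃ e ∈ DR R, x ^ e ∈ ⁅(⊤ : Subgroup G), N⁆

namespace RCl

variable {R : Subring ℚ}

lemma toFreeAb_comp_map (n : ℕ) (f : H →* A) :
    (toFreeAb A n).comp (Monoid.Coprod.map f (MonoidHom.id _)) = toFreeAb H n := by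
  apply Monoid.Coprod.hom_ext <;>
    · ext x
      simp [toFreeAb, Monoid.Coprod.map_apply_inl, Monoid.Coprod.map_apply_inr]

lemma evalWord_comp_map {n : ℕ} (f : H →* A) (g : Fin n → H) :
    (evalWord (fun i => f (g i))).comp (Monoid.Coprod.map f (MonoidHom.id _))
      = f.comp (evalWord g) := by
  apply Monoid.Coprod.hom_ext
  · ext x
    simp [evalWord, Monoid.Coprod.map_apply_inl]
  · ext i
    simp [evalWord, Monoid.Coprod.map_apply_inr]

lemma evalWord_map {n : ℕ} (f : H →* A) (g : Fin n → H)
    (x : Monoid.Coprod H (FreeGroup (Fin n))) :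
    evalWord (fun i => f (g i)) (Monoid.Coprod.map f (MonoidHom.id _) x)
      = f (evalWord g x) :=
  DFunLike.congr_fun (evalWord_comp_map f g) x

/-- Pushforward of a system along a homomorphism. -/
def pushSys (f : H →* A) (S : NullSys R H) : NullSys R A where
  n := S.n
  e := S.e
  he := S.he
  w i := Monoid.Coprod.map f (MonoidHom.id _) (S.w i)
  nullh i := by
    have h := DFunLike.congr_fun (toFreeAb_comp_map S.n f) (S.w i)
    simp only [MonoidHom.comp_apply] at h
    rw [h, S.nullh i]

lemma map_map_id {n : ℕ} (f : H →* A) (j : G →* H)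
    (x : Monoid.Coprod G (FreeGroup (Fin n))) :
    Monoid.Coprod.map f (MonoidHom.id _) (Monoid.Coprod.map j (MonoidHom.id _) x)
      = Monoid.Coprod.map (f.comp j) (MonoidHom.id _) x := by
  rw [Monoid.Coprod.map_map, MonoidHom.id_comp]

lemma isSolution_push_push (f : H →* A) (j : G →* H) (S : NullSys R G)
    (g : Fin S.n → A) :
    (pushSys f (pushSys j S)).IsSolution g ↔ (pushSys (f.comp j) S).IsSolution g := by
  unfold NullSys.IsSolution pushSys
  simp only [map_map_id]

lemma pushSolution {S : NullSys R H} {g : Fin S.n → H} (h : S.IsSolution g) (f : H →* A) :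
    (pushSys f S).IsSolution (fun i => f (g i)) := by
  intro i
  show (f (g i)) ^ S.e
      = evalWord (fun i => f (g i)) (Monoid.Coprod.map f (MonoidHom.id _) (S.w i))
  calc (f (g i)) ^ S.e = f (g i ^ S.e) := (map_pow f _ _).symm
    _ = f (evalWord g (S.w i)) := by rw [h i]
    _ = _ := (evalWord_map f g (S.w i)).symm

lemma isSolution_push_iff (f : H →* A) (hf : Function.Injective f) (S : NullSys R H)
    (g : Fin S.n → H) :
    (pushSys f S).IsSolution (fun i => f (g i)) ↔ S.IsSolution g := by
  refine ⟨fun h i => hf ?_, fun h => pushSolution h f⟩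
  have h1 : f (g i) ^ S.e = evalWord (fun i => f (g i))
      (Monoid.Coprod.map f (MonoidHom.id _) (S.w i)) := h i
  rw [map_pow, h1, evalWord_map f g (S.w i)]

end RCl

section Part2
variable {R : Subring ℚ} {A : Type*} [Group A] {H : Type*} [Group H]
open RCl

lemma isRClosed_of_mulEquiv (e : H ≃* A) (hA : IsRClosed R A) : IsRClosed R H := by
  intro S
  obtain ⟨a, ha, hu⟩ := hA (pushSys e.toMonoidHom S)
  refine ⟨fun i => e.symm (a i), ?_, ?_⟩
  · have h1 : (fun i => e.toMonoidHom ((fun i => e.symm (a i)) i)) = a :=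
      funext fun i => e.apply_symm_apply _
    have h2 := ha
    rw [← h1] at h2
    exact (isSolution_push_iff e.toMonoidHom e.injective S _).mp h2
  · intro y hy
    have := hu _ (pushSolution hy e.toMonoidHom)
    funext i
    have := congrFun this i
    rw [← this]
    exact (e.symm_apply_apply (y i)).symm

lemma isRClosed_pi {ι : Type*} (F : ι → Type*) [∀ i, Group (F i)]
    (h : ∀ i, IsRClosed R (F i)) : IsRClosed R (∀ i, F i) := by
  intro S
  choose sol hsol using fun i => h i (pushSys (Pi.evalMonoidHom F i) S)
  refine ⟨fun j i => sol i j, ?_, ?_⟩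
  · intro j
    funext i
    have h1 := (hsol i).1 j
    calc ((fun j i => sol i j) j ^ S.e) i = sol i j ^ S.e := rfl
      _ = evalWord (sol i) (Monoid.Coprod.map (Pi.evalMonoidHom F i) (MonoidHom.id _) (S.w j)) := h1
      _ = evalWord (fun k => Pi.evalMonoidHom F i ((fun j i => sol i j) k))
            (Monoid.Coprod.map (Pi.evalMonoidHom F i) (MonoidHom.id _) (S.w j)) := rfl
      _ = Pi.evalMonoidHom F i (evalWord (fun j i => sol i j) (S.w j)) :=
            evalWord_map (Pi.evalMonoidHom F i) _ (S.w j)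
  · intro y hy
    funext j
    funext i
    have h2 := (hsol i).2 _ (pushSolution hy (Pi.evalMonoidHom F i))
    exact congrFun h2 j

/-- A subgroup is solution-closed if every nullhomologous system over it has a solution
(in the ambient group) whose components lie in the subgroup. -/
def SolClosed (R : Subring ℚ) (B : Subgroup A) : Prop :=
  ∀ S : NullSys R ↥B, ∃ g : Fin S.n → A, (∀ i, g i ∈ B) ∧ (pushSys B.subtype S).IsSolution g

lemma isRClosed_subgroup (hA : IsRClosed R A) {B : Subgroup A} (hB : SolClosed R B) :
    IsRClosed R ↥B := by
  intro S
  obtain ⟨g, hgB, hg⟩ := hB S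
  obtain ⟨s0, _, hu⟩ := hA (pushSys B.subtype S)
  refine ⟨fun i => ⟨g i, hgB i⟩, ?_, ?_⟩
  · exact (isSolution_push_iff B.subtype B.subtype_injective S _).mp hg
  · intro y hy
    have h1 := hu _ (pushSolution hy B.subtype)
    have h2 := hu g hg
    funext i
    exact Subtype.ext ((congrFun h1 i).trans (congrFun h2 i).symm)

/-- All components of all solutions (in the ambient group) of systems over `B`. -/
def solSet (R : Subring ℚ) (B : Subgroup A) : Set A :=
  {a | ∃ S : NullSys R ↥B, ∃ g : Fin S.n → A,
    (pushSys B.subtype S).IsSolution g ∧ ∃ i, g i = a}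

def stepSub (R : Subring ℚ) (B : Subgroup A) : Subgroup A :=
  Subgroup.closure (↑B ∪ solSet R B)

def chainSub (R : Subring ℚ) (B : Subgroup A) : ℕ → Subgroup A
  | 0 => B
  | k + 1 => stepSub R (chainSub R B k)

def solClosure (R : Subring ℚ) (B : Subgroup A) : Subgroup A := ⨆ k, chainSub R B k

lemma le_stepSub (B : Subgroup A) : B ≤ stepSub R B :=
  fun _ hx => Subgroup.subset_closure (Or.inl hx)

lemma chainSub_mono (B : Subgroup A) : Monotone (chainSub R B) :=
  monotone_nat_of_le_succ fun k => le_stepSub _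

lemma chainSub_le_solClosure (B : Subgroup A) (k : ℕ) : chainSub R B k ≤ solClosure R B :=
  le_iSup (chainSub R B) k

lemma le_solClosure (B : Subgroup A) : B ≤ solClosure R B :=
  chainSub_le_solClosure B 0

lemma stepSub_le (hA : IsRClosed R A) {B K : Subgroup A} (hK : SolClosed R K) (hBK : B ≤ K) :
    stepSub R B ≤ K := by
  rw [stepSub, Subgroup.closure_le]
  rintro a (ha | ⟨S, g, hg, i, rfl⟩)
  · exact hBK ha
  · obtain ⟨h, hhK, hh⟩ := hK (pushSys (Subgroup.inclusion hBK) S)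
    replace hh := (isSolution_push_push K.subtype (Subgroup.inclusion hBK) S h).mp hh
    rw [Subgroup.subtype_comp_inclusion] at hh
    obtain ⟨s0, _, hu⟩ := hA (pushSys B.subtype S)
    have heq : g = h := (hu g hg).trans (hu h hh).symm
    rw [heq]
    exact hhK i

lemma solClosure_le (hA : IsRClosed R A) {B K : Subgroup A} (hK : SolClosed R K) (hBK : B ≤ K) :
    solClosure R B ≤ K := by
  refine iSup_le fun k => ?_
  induction k with
  | zero => exact hBK
  | succ k ih => exact stepSub_le hA hK ih

end Part2
section Part3
variable {R : Subring ℚ} {A : Type*} [Group A]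
open RCl

lemma exists_stage {B : Subgroup A} {n : ℕ}
    (x : Monoid.Coprod ↥(solClosure R B) (FreeGroup (Fin n))) :
    ∃ k, ∃ y, Monoid.Coprod.map
      (Subgroup.inclusion (chainSub_le_solClosure B k)) (MonoidHom.id (FreeGroup (Fin n))) y
      = x := by
  induction x using Monoid.Coprod.induction_on with
  | inl b =>
    obtain ⟨k, hk⟩ := (Subgroup.mem_iSup_of_directed
      ((chainSub_mono B).directed_le)).mp b.2
    refine ⟨k, Monoid.Coprod.inl ⟨(b : A), hk⟩, ?_⟩
    rw [Monoid.Coprod.map_apply_inl]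
    congr 1
  | inr f => exact ⟨0, Monoid.Coprod.inr f, by rw [Monoid.Coprod.map_apply_inr]; rfl⟩
  | mul x y hx hy =>
    obtain ⟨k1, a, rfl⟩ := hx
    obtain ⟨k2, b, rfl⟩ := hy
    refine ⟨max k1 k2,
      Monoid.Coprod.map (Subgroup.inclusion (chainSub_mono B (le_max_left k1 k2)))
        (MonoidHom.id _) a *
      Monoid.Coprod.map (Subgroup.inclusion (chainSub_mono B (le_max_right k1 k2)))
        (MonoidHom.id _) b, ?_⟩
    rw [map_mul, map_map_id, map_map_id]
    rfl

lemma solClosed_solClosure (hA : IsRClosed R A) (B : Subgroup A) :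
    SolClosed R (solClosure R B) := by
  intro S
  choose k w hw using fun i => exists_stage (S.w i)
  set K := Finset.univ.sup k with hK
  have hle : ∀ i, chainSub R B (k i) ≤ chainSub R B K :=
    fun i => chainSub_mono B (Finset.le_sup (Finset.mem_univ i))
  set w' : Fin S.n → Monoid.Coprod ↥(chainSub R B K) (FreeGroup (Fin S.n)) :=
    fun i => Monoid.Coprod.map (Subgroup.inclusion (hle i)) (MonoidHom.id _) (w i) with hw'
  have hlift : ∀ i, Monoid.Coprod.map
      (Subgroup.inclusion (chainSub_le_solClosure B K)) (MonoidHom.id _) (w' i) = S.w i := by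
    intro i
    rw [hw', map_map_id, ← hw i]
    rfl
  have hnull : ∀ i, toFreeAb ↥(chainSub R B K) S.n (w' i) = 1 := by
    intro i
    have h1 := DFunLike.congr_fun
      (toFreeAb_comp_map S.n (Subgroup.inclusion (chainSub_le_solClosure B K))) (w' i)
    simp only [MonoidHom.comp_apply] at h1
    rw [← h1, hlift i, S.nullh i]
  set S' : NullSys R ↥(chainSub R B K) := ⟨S.n, S.e, S.he, w', hnull⟩ with hS'
  obtain ⟨g, hg, -⟩ := hA (pushSys (chainSub R B K).subtype S')
  refine ⟨g, fun i => ?_, ?_⟩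
  · -- g i ∈ solClosure
    have : g i ∈ solSet R (chainSub R B K) := ⟨S', g, hg, i, rfl⟩
    exact chainSub_le_solClosure B (K + 1) (Subgroup.subset_closure (Or.inr this))
  · intro i
    have h1 : g i ^ S.e = evalWord g
        (Monoid.Coprod.map (chainSub R B K).subtype
          (MonoidHom.id (FreeGroup (Fin S.n))) (w' i)) := hg i
    have key : Monoid.Coprod.map (solClosure R B).subtype (MonoidHom.id _) (S.w i)
        = Monoid.Coprod.map (chainSub R B K).subtype (MonoidHom.id _) (w' i) := by
      rw [← hlift i,
        map_map_id ((solClosure R B).subtype)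
          (Subgroup.inclusion (chainSub_le_solClosure B K)) (w' i),
        Subgroup.subtype_comp_inclusion]
    show g i ^ S.e = evalWord g
        (Monoid.Coprod.map (solClosure R B).subtype
          (MonoidHom.id (FreeGroup (Fin S.n))) (S.w i))
    rw [key]
    exact h1
end Part3
section Part4
universe u
variable {R : Subring ℚ}
open Cardinal RCl

lemma card_freeGroup_fin (n : ℕ) : #(FreeGroup (Fin n)) ≤ ℵ₀ := by
  have : Countable (FreeGroup (Fin n)) := FreeGroup.toWord_injective.countable
  exact Cardinal.mk_le_aleph0

lemma card_coprod (B : Type u) [Group B] (n : ℕ) :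
    #(Monoid.Coprod B (FreeGroup (Fin n))) ≤ max #B ℵ₀ := by
  have h1 : #(Monoid.Coprod B (FreeGroup (Fin n)))
      ≤ #(FreeMonoid (B ⊕ FreeGroup (Fin n))) :=
    Cardinal.mk_le_of_surjective Monoid.Coprod.mk_surjective
  have h2 : #(FreeMonoid (B ⊕ FreeGroup (Fin n))) = #(List (B ⊕ FreeGroup (Fin n))) := rfl
  have h3 : #(List (B ⊕ FreeGroup (Fin n))) ≤ max ℵ₀ #(B ⊕ FreeGroup (Fin n)) :=
    Cardinal.mk_list_le_max _
  have h4 : #(B ⊕ FreeGroup (Fin n)) ≤ max #B ℵ₀ := by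
    rw [Cardinal.mk_sum]
    simp only [Cardinal.lift_uzero, Cardinal.lift_id]
    exact Cardinal.add_le_of_le (le_max_right _ _) (le_max_left _ _)
      ((Cardinal.lift_le_aleph0.mpr (card_freeGroup_fin n)).trans (le_max_right _ _))
  calc #(Monoid.Coprod B (FreeGroup (Fin n)))
      ≤ max ℵ₀ #(B ⊕ FreeGroup (Fin n)) := (h1.trans_eq h2).trans h3
    _ ≤ max ℵ₀ (max #B ℵ₀) := max_le_max le_rfl h4
    _ = max #B ℵ₀ := by rw [max_comm ℵ₀, max_assoc, max_self]

lemma card_fin_arrow (n : ℕ) (C : Type u) : #(Fin n → C) ≤ max #C ℵ₀ := by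
  have e : (Fin n → C) ≃ (ULift.{u} (Fin n) → C) :=
    Equiv.arrowCongr Equiv.ulift.symm (Equiv.refl _)
  rw [Cardinal.mk_congr e, ← Cardinal.power_def]
  have : #(ULift.{u} (Fin n)) = (n : Cardinal.{u}) := by simp
  rw [this]
  exact Cardinal.power_nat_le_max

lemma card_nullSys (B : Type u) [Group B] : #(NullSys R B) ≤ max #B ℵ₀ := by
  have hinj : Function.Injective
      (fun S : NullSys R B =>
        (⟨ULift.up (S.n, S.e), S.w⟩ :
          Σ p : ULift.{u} (ℕ × ℕ), Fin p.down.1 → Monoid.Coprod B (FreeGroup (Fin p.down.1)))) := by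
    intro S1 S2 h
    cases S1; cases S2
    injection h with h1 h2
    injection h1 with h1
    injection h1 with hn he
    subst hn; subst he
    have := eq_of_heq h2
    subst this
    rfl
  have h1 := Cardinal.mk_le_of_injective hinj
  refine h1.trans ?_
  rw [Cardinal.mk_sigma]
  refine (Cardinal.sum_le_sum _ (fun _ => max #B ℵ₀) ?_).trans ?_
  · intro p
    exact (card_fin_arrow _ _).trans
      (max_le_max (card_coprod B _) le_rfl |>.trans (by rw [max_assoc, max_self]))
  · rw [Cardinal.sum_const']
    have : #(ULift.{u} (ℕ × ℕ)) = ℵ₀ := by simp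
    rw [this]
    exact (Cardinal.mul_le_max_of_aleph0_le_left le_rfl).trans
      (max_le (le_max_right _ _) le_rfl)

lemma card_closure (A : Type u) [Group A] (s : Set A) :
    #(Subgroup.closure s) ≤ max #s ℵ₀ := by
  rcases isEmpty_or_nonempty s with he | hne
  · have hs : s = ∅ := by
      ext x; exact ⟨fun hx => (he.false ⟨x, hx⟩).elim, fun hx => hx.elim⟩
    rw [hs, Subgroup.closure_empty]
    have : Countable (⊥ : Subgroup A) := inferInstance
    exact Cardinal.mk_le_aleph0.trans (le_max_right _ _)
  · have hr : (FreeGroup.lift (fun x : s => (x : A))).range = Subgroup.closure s := by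
      rw [FreeGroup.range_lift_eq_closure, Subtype.range_coe]
    have hsurj : Function.Surjective
        (fun b : FreeGroup s =>
          (⟨FreeGroup.lift (fun x : s => (x : A)) b, b, rfl⟩ :
            (FreeGroup.lift (fun x : s => (x : A))).range)) := by
      rintro ⟨y, b, rfl⟩
      exact ⟨b, rfl⟩
    have h1 : #(Subgroup.closure s) ≤ #(FreeGroup s) := by
      rw [← hr]
      exact Cardinal.mk_le_of_surjective hsurj
    rw [Cardinal.mk_freeGroup] at h1
    exact h1
end Part4
section Part5
universe u
variable {R : Subring ℚ} {A : Type u} [Group A]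
open Cardinal RCl

lemma card_solSet (hA : IsRClosed R A) (B : Subgroup A) :
    #(solSet R B) ≤ max #↥B ℵ₀ := by
  classical
  set f : (Σ S : NullSys R ↥B, ULift.{u} (Fin S.n)) → A :=
    fun p => Classical.choose (hA (pushSys B.subtype p.1)).exists p.2.down with hf
  have hsub : solSet R B ⊆ Set.range f := by
    rintro a ⟨S, g, hg, i, rfl⟩
    have hspec := Classical.choose_spec (hA (pushSys B.subtype S)).exists
    have : g = Classical.choose (hA (pushSys B.subtype S)).exists :=
      (hA (pushSys B.subtype S)).unique hg hspec
    exact ⟨⟨S, ULift.up i⟩, by rw [hf]; exact (congrFun this i).symm⟩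
  refine (Cardinal.mk_le_mk_of_subset hsub).trans (Cardinal.mk_range_le.trans ?_)
  rw [Cardinal.mk_sigma]
  refine (Cardinal.sum_le_sum _ (fun _ => ℵ₀) fun S => ?_).trans ?_
  · have : Countable (ULift.{u} (Fin S.n)) := inferInstance
    exact Cardinal.mk_le_aleph0
  · rw [Cardinal.sum_const']
    calc #(NullSys R ↥B) * ℵ₀ ≤ (max #↥B ℵ₀) * ℵ₀ :=
          mul_le_mul_left (card_nullSys ↥B) _
      _ ≤ max (max (max #↥B ℵ₀) ℵ₀) ℵ₀ := Cardinal.mul_le_max _ _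
      _ = max #↥B ℵ₀ := by rw [max_assoc, max_self, max_assoc, max_self]

lemma card_stepSub (hA : IsRClosed R A) (B : Subgroup A) :
    #↥(stepSub R B) ≤ max #↥B ℵ₀ := by
  refine (card_closure A (↑B ∪ solSet R B)).trans ?_
  have h1 : #↥(↑B ∪ solSet R B : Set A) ≤ max #↥B ℵ₀ :=
    (Cardinal.mk_union_le _ _).trans
      (Cardinal.add_le_of_le (le_max_right _ _) (le_max_left _ _) (card_solSet hA B))
  exact max_le (h1.trans le_rfl) (le_max_right _ _)

lemma card_chainSub (hA : IsRClosed R A) (B : Subgroup A) (k : ℕ) :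
    #↥(chainSub R B k) ≤ max #↥B ℵ₀ := by
  induction k with
  | zero => exact le_max_left _ _
  | succ k ih =>
    refine (card_stepSub hA (chainSub R B k)).trans ?_
    exact max_le (ih.trans le_rfl) (le_max_right _ _)

lemma card_solClosure (hA : IsRClosed R A) (B : Subgroup A) :
    #↥(solClosure R B) ≤ max #↥B ℵ₀ := by
  have hcoe : ((solClosure R B : Subgroup A) : Set A)
      = ⋃ k : ULift.{u} ℕ, ((chainSub R B k.down : Subgroup A) : Set A) := by
    rw [solClosure, Subgroup.coe_iSup_of_directed ((chainSub_mono B).directed_le)]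
    ext x
    simp only [Set.mem_iUnion]
    exact ⟨fun ⟨k, hk⟩ => ⟨ULift.up k, hk⟩, fun ⟨k, hk⟩ => ⟨k.down, hk⟩⟩
  have h1 : #↥(solClosure R B) = #↥(⋃ k : ULift.{u} ℕ, ((chainSub R B k.down : Subgroup A) : Set A)) := by
    rw [← hcoe]; rfl
  rw [h1]
  refine (Cardinal.mk_iUnion_le _).trans ?_
  have h2 : #(ULift.{u} ℕ) = ℵ₀ := by simp
  have h3 : ⨆ k : ULift.{u} ℕ, #↥((chainSub R B k.down : Subgroup A) : Set A) ≤ max #↥B ℵ₀ :=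
    ciSup_le' fun k => card_chainSub hA B k.down
  calc #(ULift.{u} ℕ) * ⨆ k : ULift.{u} ℕ, #↥((chainSub R B k.down : Subgroup A) : Set A)
      ≤ ℵ₀ * (max #↥B ℵ₀) := by rw [h2]; exact mul_le_mul_right h3 _
    _ ≤ max ℵ₀ (max #↥B ℵ₀) := Cardinal.mul_le_max_of_aleph0_le_left le_rfl
    _ = max #↥B ℵ₀ := by rw [max_comm ℵ₀, max_assoc, max_self]
end Part5
section Part6
universe u
open RCl Cardinal

/-- Bundled group structures on subsets of `G ⊕ ULift ℕ`. -/
def Pts (G : Type u) : Type u := Σ s : Set (G ⊕ ULift.{u} ℕ), Group ↥s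

instance (G : Type u) (p : Pts G) : Group ↥p.1 := p.2

/-- Index type: all homomorphisms from `G` into small `R`-closed groups. -/
def Idx (R : Subring ℚ) (G : Type u) [Group G] : Type u :=
  Σ p : Pts G, { f : G →* ↥p.1 // IsRClosed R ↥p.1 }

theorem exists_rClosure' (R : Subring ℚ) (G : Type u) [Group G] :
    ∃ (Ghat : Type u) (_ : Group Ghat) (c : G →* Ghat), IsRClosed R Ghat ∧
      ∀ (A : Type u) (_ : Group A), IsRClosed R A →
        ∀ φ : G →* A, ∃! ψ : Ghat →* A, ψ.comp c = φ := by
  classical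
  set P := ∀ i : Idx R G, ↥i.1.1 with hPdef
  have hP : IsRClosed R P := isRClosed_pi _ (fun i => i.2.2)
  set c : G →* P := Pi.monoidHom (fun i => i.2.1) with hc
  set Gw : Subgroup P := solClosure R c.range with hGw
  have hGhat : IsRClosed R ↥Gw :=
    isRClosed_subgroup hP (solClosed_solClosure hP _)
  have hmemGw : ∀ g : G, c g ∈ Gw := fun g => le_solClosure c.range ⟨g, rfl⟩
  set chat : G →* ↥Gw := c.codRestrict Gw hmemGw with hchat
  refine ⟨↥Gw, inferInstance, chat, hGhat, ?_⟩
  intro A instA hA φ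
  -- small R-closed subgroup of A containing the image of φ
  set A' : Subgroup A := solClosure R φ.range with hA'def
  have hA' : IsRClosed R ↥A' := isRClosed_subgroup hA (solClosed_solClosure hA _)
  have hmemA' : ∀ g : G, φ g ∈ A' := fun g => le_solClosure φ.range ⟨g, rfl⟩
  -- cardinality bound and embedding into the fixed carrier
  have hcard : #↥A' ≤ #(G ⊕ ULift.{u} ℕ) := by
    have h1 : #↥A' ≤ max #↥φ.range ℵ₀ := card_solClosure hA φ.range
    have h2 : #↥φ.range ≤ #G := by
      have : #↥φ.range = #↥(Set.range ⇑φ) := by rw [← MonoidHom.coe_range]; rfl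
      rw [this]; exact Cardinal.mk_range_le
    have h3 : #(G ⊕ ULift.{u} ℕ) = #G + ℵ₀ := by simp [Cardinal.mk_sum]
    rw [h3]
    exact (h1.trans (max_le_max h2 le_rfl)).trans (max_le le_self_add le_add_self)
  obtain ⟨ι⟩ := Cardinal.le_def _ _ |>.mp hcard
  set s₀ : Set (G ⊕ ULift.{u} ℕ) := Set.range ι with hs₀
  set e : ↥s₀ ≃ ↥A' := (Equiv.ofInjective ι ι.injective).symm with he
  letI grp0 : Group ↥s₀ := e.group
  have me : ↥s₀ ≃* ↥A' := e.mulEquiv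
  have hclosed0 : IsRClosed R ↥s₀ := isRClosed_of_mulEquiv me hA'
  set f0 : G →* ↥s₀ :=
    me.symm.toMonoidHom.comp (φ.codRestrict A' hmemA') with hf0
  set i₀ : Idx R G := ⟨⟨s₀, grp0⟩, ⟨f0, hclosed0⟩⟩ with hi₀
  set ψ : ↥Gw →* A :=
    A'.subtype.comp (me.toMonoidHom.comp
      ((Pi.evalMonoidHom _ i₀).comp Gw.subtype)) with hψ
  have hψc : ψ.comp chat = φ := by
    ext g
    show A'.subtype (me (c g i₀)) = φ g
    have : c g i₀ = f0 g := rfl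
    rw [this, hf0]
    show A'.subtype (me (me.symm (φ.codRestrict A' hmemA' g))) = φ g
    rw [me.apply_symm_apply]
    rfl
  refine ⟨ψ, hψc, ?_⟩
  -- uniqueness
  intro ψ' hψ'
  -- it suffices: any two factorizations agree
  suffices hsuff : ∀ ψ₁ ψ₂ : ↥Gw →* A, ψ₁.comp chat = φ → ψ₂.comp chat = φ → ψ₁ = ψ₂ by
    exact hsuff ψ' ψ hψ' hψc
  intro ψ₁ ψ₂ h₁ h₂
  set K : Subgroup P := Subgroup.map Gw.subtype (ψ₁.eqLocus ψ₂) with hKdef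
  have hKG : K ≤ Gw := by
    rintro x ⟨y, hy, rfl⟩
    exact y.2
  have hK : SolClosed R K := by
    intro S
    set j : ↥K →* ↥Gw := Subgroup.inclusion hKG with hj
    obtain ⟨g, hg, -⟩ := hGhat (pushSys j S)
    have hψj : ∀ x : ↥K, ψ₁ (j x) = ψ₂ (j x) := by
      intro x
      obtain ⟨z, hz, hzx⟩ := x.2
      have : j x = z := Subtype.ext hzx.symm
      rw [this]
      exact hz
    have hcomp : ψ₁.comp j = ψ₂.comp j := MonoidHom.ext hψj
    have h1' : (pushSys (ψ₁.comp j) S).IsSolution (fun i => ψ₁ (g i)) :=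
      (isSolution_push_push ψ₁ j S _).mp (pushSolution hg ψ₁)
    have h2' : (pushSys (ψ₁.comp j) S).IsSolution (fun i => ψ₂ (g i)) := by
      rw [hcomp]
      exact (isSolution_push_push ψ₂ j S _).mp (pushSolution hg ψ₂)
    have heq := (hA (pushSys (ψ₁.comp j) S)).unique h1' h2'
    refine ⟨fun i => ↑(g i), fun i => ?_, ?_⟩
    · exact ⟨g i, congrFun heq i, rfl⟩
    · have h3 : (pushSys (Gw.subtype.comp j) S).IsSolution (fun i => ↑(g i)) :=
        (isSolution_push_push Gw.subtype j S _).mp (pushSolution hg Gw.subtype)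
      rw [Subgroup.subtype_comp_inclusion] at h3
      exact h3
  have hcK : c.range ≤ K := by
    rintro x ⟨g, rfl⟩
    refine ⟨chat g, ?_, rfl⟩
    show ψ₁ (chat g) = ψ₂ (chat g)
    rw [show ψ₁ (chat g) = (ψ₁.comp chat) g from rfl,
        show ψ₂ (chat g) = (ψ₂.comp chat) g from rfl, h₁, h₂]
  have hle : Gw ≤ K := solClosure_le hP hK hcK
  ext x
  obtain ⟨z, hz, hzx⟩ := hle x.2
  have : z = x := Subtype.ext hzx
  rw [← this]
  exact hz
end Part6

/-- Every group `G` admits an `R`-closure: a homomorphism `G → Ĝ` into an `R`-closed group which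
is initial among homomorphisms of `G` into `R`-closed groups. -/
theorem exists_rClosure (R : Subring ℚ) (G : Type u) [Group G] :
    ∃ (Ghat : Type u) (_ : Group Ghat) (c : G →* Ghat), IsRClosed R Ghat ∧
      ∀ (A : Type u) (_ : Group A), IsRClosed R A →
        ∀ φ : G →* A, ∃! ψ : Ghat →* A, ψ.comp c = φ :=
  exists_rClosure' R G
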